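/- Let (I, E) be a monomial for A//E(n) of odd degree and let w = w(I,E) be its weight. Then its topological degree satisfies −w + 1 ≤ deg(I,E), and p·deg(I,E) ≤ −(p−1)·w + p·(1 − 2p^n) (equivalently, deg(I,E) ≤ −((p−1)/p)·w + 1 − 2p^n). -/
import Mathlib


/-- A monomial for `𝒜 ⫽ E(n)` at the prime `p`: a pair `(I, E)` of finitely
supported functions, `I` indexed by `{1, 2, 3, …}` (encoded by `I 0 = 0`),
`E` taking values in `{0, 1}` and vanishing on `{0, …, n}`. -/
structure Mon (p n : ℕ) : Type where
  I : ℕ →₀ ℕ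
  E : ℕ →₀ ℕ
  hI0 : I 0 = 0
  hE1 : ∀ j, E j ≤ 1
  hEn : ∀ j, j ≤ n → E j = 0

namespace Mon

variable {p n : ℕ}

/-- The topological degree `deg(I,E) = −Σ_{j≥1} (2p^j − 2)·I j − Σ_{j≥0} (2p^j − 1)·E j`. -/
def deg (m : Mon p n) : ℤ :=
  -(m.I.sum fun j a => (2 * (p : ℤ) ^ j - 2) * a)
    - m.E.sum fun j a => (2 * (p : ℤ) ^ j - 1) * a

/-- The weight `w(I,E) = Σ_{j≥1} 2p^j·I j + Σ_{j≥0} 2p^j·E j`. -/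
def wt (m : Mon p n) : ℕ :=
  (m.I.sum fun j a => 2 * p ^ j * a) + m.E.sum fun j a => 2 * p ^ j * a

/-- The `ℓ`-mixed weight `mw_ℓ(I,E) = Σ_{1≤j<ℓ} 2p^j·I j + 2p^ℓ·Σ_{j≥ℓ} I j`. -/
def mw (ℓ : ℕ) (m : Mon p n) : ℕ :=
  m.I.sum fun j a => if j < ℓ then 2 * p ^ j * a else 2 * p ^ ℓ * a

end Mon

/-- an odd-degree monomial of `𝒜 ⫽ E(n)` of weight `w` has
topological degree between `−w + 1` and `−((p−1)/p)·w + 1 − 2pⁿ`. -/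
theorem degree_bounds_of_odd (p n : ℕ) [Fact p.Prime] (m : Mon p n)
    (hodd : Odd m.deg) :
    -(m.wt : ℤ) + 1 ≤ m.deg ∧
      (p : ℤ) * m.deg ≤ -((p : ℤ) - 1) * m.wt + p * (1 - 2 * (p : ℤ) ^ n) := by
  have hp : p.Prime := Fact.out
  have hp2 : (2 : ℤ) ≤ (p : ℤ) := by exact_mod_cast hp.two_le
  set SI : ℤ := ∑ j ∈ m.I.support, (m.I j : ℤ) with hSI
  set SE : ℤ := ∑ j ∈ m.E.support, (m.E j : ℤ) with hSE
  set WI : ℤ := ∑ j ∈ m.I.support, 2 * (p : ℤ) ^ j * m.I j with hWI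
  set WE : ℤ := ∑ j ∈ m.E.support, 2 * (p : ℤ) ^ j * m.E j with hWE
  have hdeg : m.deg = -WI - WE + 2 * SI + SE := by
    have h1 : ∑ j ∈ m.I.support, (2 * (p : ℤ) ^ j - 2) * m.I j = WI - 2 * SI := by
      rw [hWI, hSI, Finset.mul_sum, ← Finset.sum_sub_distrib]
      exact Finset.sum_congr rfl fun j _ => by ring
    have h2 : ∑ j ∈ m.E.support, (2 * (p : ℤ) ^ j - 1) * m.E j = WE - SE := by
      rw [hWE, hSE, ← Finset.sum_sub_distrib]
      exact Finset.sum_congr rfl fun j _ => by ring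
    simp only [Mon.deg, Finsupp.sum, h1, h2]
    ring
  have hwt : (m.wt : ℤ) = WI + WE := by
    simp only [Mon.wt, Finsupp.sum, hWI, hWE]
    push_cast
    ring
  have hSInn : 0 ≤ SI := Finset.sum_nonneg fun j _ => by positivity
  have hSEnn : 0 ≤ SE := Finset.sum_nonneg fun j _ => by positivity
  -- parity: SE is odd, hence ≥ 1
  have hTI : WI = 2 * ∑ j ∈ m.I.support, (p : ℤ) ^ j * m.I j := by
    rw [hWI, Finset.mul_sum]; exact Finset.sum_congr rfl fun j _ => by ring
  have hTE : WE = 2 * ∑ j ∈ m.E.support, (p : ℤ) ^ j * m.E j := by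
    rw [hWE, Finset.mul_sum]; exact Finset.sum_congr rfl fun j _ => by ring
  have hSE1 : 1 ≤ SE := by
    obtain ⟨k, hk⟩ := hodd
    rw [hdeg, hTI, hTE] at hk
    omega
  -- WI ≥ 2 p SI
  have hIbound : 2 * (p : ℤ) * SI ≤ WI := by
    rw [hWI, hSI, Finset.mul_sum]
    refine Finset.sum_le_sum fun j hj => ?_
    have hj0 : j ≠ 0 := by
      intro h; exact (Finsupp.mem_support_iff.mp hj) (h ▸ m.hI0)
    have : (p : ℤ) ≤ (p : ℤ) ^ j := le_self_pow₀ (by linarith) hj0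
    have hx : (0 : ℤ) ≤ (m.I j : ℤ) := by positivity
    nlinarith
  -- WE ≥ 2 p^(n+1) SE
  have hEbound : 2 * (p : ℤ) ^ (n + 1) * SE ≤ WE := by
    rw [hWE, hSE, Finset.mul_sum]
    refine Finset.sum_le_sum fun j hj => ?_
    have hjn : n + 1 ≤ j := by
      by_contra h
      exact (Finsupp.mem_support_iff.mp hj) (m.hEn j (by omega))
    have : (p : ℤ) ^ (n + 1) ≤ (p : ℤ) ^ j := pow_le_pow_right₀ (by linarith) hjn
    have hx : (0 : ℤ) ≤ (m.E j : ℤ) := by positivity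
    nlinarith
  have hpow : (p : ℤ) ≤ (p : ℤ) ^ (n + 1) := le_self_pow₀ (by linarith) (by omega)
  have hpn : (p : ℤ) * (p : ℤ) ^ n = (p : ℤ) ^ (n + 1) := by ring
  constructor
  · rw [hdeg, hwt]; linarith
  · rw [hdeg, hwt]
    nlinarith [mul_le_mul_of_nonneg_right hpow (by linarith : (0 : ℤ) ≤ SE - 1)]
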